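/- Let A, B be positive definite n×n matrices, Z ∈ M_n(ℂ), and α > 0. Then the function t ↦ log ‖ |A^t Z B^t|^α ‖ is convex on ℝ, where ‖·‖ is the operator norm; equivalently, for all s, t ∈ ℝ, ‖ |A^{(s+t)/2} Z B^{(s+t)/2}|^α ‖ ≤ ‖ |A^t Z B^t|^α ‖^{1/2} ‖ |A^s Z B^s|^α ‖^{1/2}. -/

import Mathlib

open Matrix ComplexOrder

/-- The absolute value `|M| = (Mᴴ M)^{1/2}` of a complex matrix. -/
noncomputable def matAbs {n : ℕ} (M : Matrix (Fin n) (Fin n) ℂ) : Matrix (Fin n) (Fin n) ℂ :=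
  ((Matrix.posSemidef_conjTranspose_mul_self M).1.eigenvectorUnitary : Matrix (Fin n) (Fin n) ℂ) *
    diagonal ((↑) ∘ (√·) ∘ (Matrix.posSemidef_conjTranspose_mul_self M).1.eigenvalues) *
    (star ((Matrix.posSemidef_conjTranspose_mul_self M).1.eigenvectorUnitary :
      Matrix (Fin n) (Fin n) ℂ))

theorem matAbs_posSemidef {n : ℕ} (M : Matrix (Fin n) (Fin n) ℂ) : (matAbs M).PosSemidef :=
  by
    unfold matAbs
    rw [Matrix.star_eq_conjTranspose]
    refine Matrix.PosSemidef.mul_mul_conjTranspose_same ?_ _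
    rw [Matrix.posSemidef_diagonal_iff]
    intro i
    simp [Complex.zero_le_real, Real.sqrt_nonneg]

/-- Eigenvalues of a Hermitian matrix arranged in decreasing order:
`eigDesc hM j` is the `j`-th largest eigenvalue. -/
noncomputable def eigDesc {n : ℕ} {M : Matrix (Fin n) (Fin n) ℂ} (hM : M.IsHermitian) :
    Fin n → ℝ :=
  fun i => hM.eigenvalues (Tuple.sort hM.eigenvalues i.rev)

/-- Eigenvalues of a Hermitian matrix arranged in increasing order. -/
noncomputable def eigAsc {n : ℕ} {M : Matrix (Fin n) (Fin n) ℂ} (hM : M.IsHermitian) :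
    Fin n → ℝ :=
  fun i => hM.eigenvalues (Tuple.sort hM.eigenvalues i)

/-- The largest eigenvalue of a Hermitian matrix. -/
noncomputable def maxEig {n : ℕ} {M : Matrix (Fin n) (Fin n) ℂ} (hM : M.IsHermitian) : ℝ :=
  ⨆ i, hM.eigenvalues i

/-- Real power `M^t` of a Hermitian matrix, via the spectral decomposition. -/
noncomputable def rpowH {n : ℕ} {M : Matrix (Fin n) (Fin n) ℂ} (hM : M.IsHermitian) (t : ℝ) :
    Matrix (Fin n) (Fin n) ℂ :=
  (hM.eigenvectorUnitary : Matrix (Fin n) (Fin n) ℂ) *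
    Matrix.diagonal (fun i => ((hM.eigenvalues i ^ t : ℝ) : ℂ)) *
    star (hM.eigenvectorUnitary : Matrix (Fin n) (Fin n) ℂ)

theorem rpowH_isHermitian {n : ℕ} {M : Matrix (Fin n) (Fin n) ℂ} (hM : M.IsHermitian) (t : ℝ) :
    (rpowH hM t).IsHermitian := by
  unfold rpowH
  unfold Matrix.IsHermitian
  simp [Matrix.conjTranspose_mul, Matrix.diagonal_conjTranspose, mul_assoc,
    Matrix.star_eq_conjTranspose]
  congr 2
  funext i
  simp [star]
  rfl

/-- The ℓ²→ℓ² operator norm of a complex matrix. -/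
noncomputable def opN {n : ℕ} (M : Matrix (Fin n) (Fin n) ℂ) : ℝ :=
  ‖Matrix.toEuclideanCLM (𝕜 := ℂ) M‖

/-! ### Auxiliary material -/

open scoped Matrix.Norms.L2Operator NNReal ENNReal
set_option maxHeartbeats 1000000

noncomputable instance {n : ℕ} : CStarAlgebra (Matrix (Fin n) (Fin n) ℂ) := { }

lemma aux_contOn {n : ℕ} (a : Matrix (Fin n) (Fin n) ℂ) (f : ℝ → ℝ) :
    ContinuousOn f (spectrum ℝ a) := (Matrix.finite_real_spectrum (A := a)).continuousOn f

lemma aux_opN_eq {n : ℕ} (M : Matrix (Fin n) (Fin n) ℂ) : opN M = ‖M‖ := rfl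

lemma aux_rpowH_eq_cfc {n : ℕ} {M : Matrix (Fin n) (Fin n) ℂ} (hM : M.IsHermitian) (t : ℝ) :
    rpowH hM t = cfc (fun x : ℝ => x ^ t) M := by
  rw [Matrix.IsHermitian.cfc_eq hM]; rfl

lemma aux_spectrum_nonneg {n : ℕ} {a : Matrix (Fin n) (Fin n) ℂ} (ha : a.PosSemidef)
    {x : ℝ} (hx : x ∈ spectrum ℝ a) : 0 ≤ x := by
  rw [(ha.1 : a.IsHermitian).spectrum_real_eq_range_eigenvalues] at hx
  obtain ⟨i, rfl⟩ := hx
  exact ha.eigenvalues_nonneg i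

lemma aux_spectrum_pos {n : ℕ} {a : Matrix (Fin n) (Fin n) ℂ} (ha : a.PosDef)
    {x : ℝ} (hx : x ∈ spectrum ℝ a) : 0 < x := by
  rw [(ha.1 : a.IsHermitian).spectrum_real_eq_range_eigenvalues] at hx
  obtain ⟨i, rfl⟩ := hx
  exact ha.eigenvalues_pos i

lemma aux_norm_cfc_rpow {n : ℕ} {a : Matrix (Fin n) (Fin n) ℂ} (ha : a.PosSemidef)
    {α : ℝ} (hα : 0 < α) : ‖cfc (fun x : ℝ => x ^ α) a‖ = ‖a‖ ^ α := by
  rcases Nat.eq_zero_or_pos n with rfl | hn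
  · have h1 : cfc (fun x : ℝ => x ^ α) a = 0 := Subsingleton.elim _ _
    have h2 : a = 0 := Subsingleton.elim _ _
    rw [h1, h2, norm_zero, Real.zero_rpow hα.ne']
  · haveI : NeZero n := ⟨hn.ne'⟩
    haveI : Nonempty (Fin n) := ⟨⟨0, hn⟩⟩
    haveI : Nontrivial (Matrix (Fin n) (Fin n) ℂ) := inferInstance
    have hsa : IsSelfAdjoint a := ha.1
    have h1 := IsGreatest.norm_cfc (fun x : ℝ => x ^ α) a (aux_contOn a _) hsa
    have h2 := IsGreatest.norm_cfc (id : ℝ → ℝ) a (aux_contOn a _) hsa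
    rw [cfc_id ℝ a] at h2
    refine (h1.unique ?_)
    obtain ⟨⟨x₀, hx₀, hx₀n⟩, hub⟩ := h2
    simp only [id_eq] at hx₀n hub
    have hx₀0 : 0 ≤ x₀ := aux_spectrum_nonneg ha hx₀
    have hx₀e : x₀ = ‖a‖ := by rw [← hx₀n, Real.norm_of_nonneg hx₀0]
    constructor
    · exact ⟨x₀, hx₀, by
        show ‖x₀ ^ α‖ = _
        rw [Real.norm_of_nonneg (Real.rpow_nonneg hx₀0 α), hx₀e]⟩
    · rintro - ⟨x, hx, rfl⟩
      show ‖x ^ α‖ ≤ _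
      have hx0 : 0 ≤ x := aux_spectrum_nonneg ha hx
      rw [Real.norm_of_nonneg (Real.rpow_nonneg hx0 α), ← hx₀e]
      rw [hx₀e]
      refine Real.rpow_le_rpow hx0 ?_ hα.le
      have := hub ⟨x, hx, rfl⟩
      simp only [id_eq] at this
      rwa [Real.norm_of_nonneg hx0, ← hx₀e, hx₀e] at this

lemma aux_specRad_comm {A : Type*} [NormedRing A] [NormedAlgebra ℂ A] (a b : A) :
    spectralRadius ℂ (a * b) = spectralRadius ℂ (b * a) := by
  have key : ∀ x y : A, spectralRadius ℂ (x * y) ≤ spectralRadius ℂ (y * x) := by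
    intro x y
    rw [spectralRadius, spectralRadius]
    refine iSup₂_le fun k hk => ?_
    rcases eq_or_ne k 0 with rfl | hk0
    · simp
    · have : k ∈ spectrum ℂ (y * x) \ {0} := by
        rw [← spectrum.nonzero_mul_comm]
        exact ⟨hk, hk0⟩
      exact le_iSup₂ (f := fun k _ => (‖k‖₊ : ENNReal)) k this.1
  exact le_antisymm (key a b) (key b a)

lemma aux_rpowH_mul_rpowH {n : ℕ} {A : Matrix (Fin n) (Fin n) ℂ} (hA : A.PosDef) (s t : ℝ) :
    rpowH hA.1 s * rpowH hA.1 t = rpowH hA.1 (s + t) := by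
  rw [aux_rpowH_eq_cfc, aux_rpowH_eq_cfc, aux_rpowH_eq_cfc,
    ← cfc_mul _ _ A (aux_contOn A _) (aux_contOn A _)]
  exact cfc_congr fun x hx => (Real.rpow_add (aux_spectrum_pos hA hx) s t).symm

lemma aux_rpowH_zero {n : ℕ} {A : Matrix (Fin n) (Fin n) ℂ} (hA : A.PosDef) :
    rpowH hA.1 0 = 1 := by
  rw [aux_rpowH_eq_cfc]
  calc cfc (fun x : ℝ => x ^ (0 : ℝ)) A = cfc (fun _ : ℝ => (1 : ℝ)) A :=
        cfc_congr fun x _ => Real.rpow_zero x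
    _ = 1 := cfc_const_one ℝ A hA.1

lemma aux_sandwich_ne_zero {n : ℕ} {A B Z : Matrix (Fin n) (Fin n) ℂ}
    (hA : A.PosDef) (hB : B.PosDef) (hZ : Z ≠ 0) (u : ℝ) :
    rpowH hA.1 u * Z * rpowH hB.1 u ≠ 0 := by
  intro h
  apply hZ
  have ha1 : rpowH hA.1 (-u) * rpowH hA.1 u = 1 := by
    rw [aux_rpowH_mul_rpowH hA, neg_add_cancel, aux_rpowH_zero hA]
  have hb1 : rpowH hB.1 u * rpowH hB.1 (-u) = 1 := by
    rw [aux_rpowH_mul_rpowH hB, add_neg_cancel, aux_rpowH_zero hB]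
  have e : rpowH hA.1 (-u) * (rpowH hA.1 u * Z * rpowH hB.1 u) * rpowH hB.1 (-u) = Z := by
    simp only [mul_assoc]
    rw [hb1, mul_one, ← mul_assoc, ha1, one_mul]
  rw [← e, h, mul_zero, zero_mul]

lemma aux_core_ineq {n : ℕ} (A B Z : Matrix (Fin n) (Fin n) ℂ)
    (hA : A.PosDef) (hB : B.PosDef) (s t : ℝ) :
    ‖rpowH hA.1 ((s + t) / 2) * Z * rpowH hB.1 ((s + t) / 2)‖₊ ^ 2 ≤
      ‖rpowH hA.1 t * Z * rpowH hB.1 t‖₊ * ‖rpowH hA.1 s * Z * rpowH hB.1 s‖₊ := by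
  rcases Nat.eq_zero_or_pos n with rfl | hn
  · have h : (rpowH hA.1 ((s + t) / 2) * Z * rpowH hB.1 ((s + t) / 2)) = 0 :=
      Subsingleton.elim _ _
    rw [h, nnnorm_zero]
    simp
  haveI : Nonempty (Fin n) := ⟨⟨0, hn⟩⟩
  haveI : Nontrivial (Matrix (Fin n) (Fin n) ℂ) := inferInstance
  have haa' : rpowH hA.1 ((s + t) / 2) * rpowH hA.1 ((s + t) / 2) =
      rpowH hA.1 t * rpowH hA.1 s := by
    rw [aux_rpowH_mul_rpowH hA, aux_rpowH_mul_rpowH hA,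
      show (s + t) / 2 + (s + t) / 2 = t + s from by ring]
  have hbb' : rpowH hB.1 ((s + t) / 2) * rpowH hB.1 ((s + t) / 2) =
      rpowH hB.1 s * rpowH hB.1 t := by
    rw [aux_rpowH_mul_rpowH hB, aux_rpowH_mul_rpowH hB,
      show (s + t) / 2 + (s + t) / 2 = s + t from by ring]
  have haa : ∀ W, rpowH hA.1 ((s + t) / 2) * (rpowH hA.1 ((s + t) / 2) * W) =
      rpowH hA.1 t * (rpowH hA.1 s * W) := by
    intro W
    rw [← mul_assoc, ← mul_assoc, haa']
  have hMt : (rpowH hA.1 ((s + t) / 2) * Z * rpowH hB.1 ((s + t) / 2))ᴴ =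
      rpowH hB.1 ((s + t) / 2) * (Zᴴ * rpowH hA.1 ((s + t) / 2)) := by
    rw [conjTranspose_mul, conjTranspose_mul,
      (rpowH_isHermitian hA.1 ((s + t) / 2)), (rpowH_isHermitian hB.1 ((s + t) / 2))]
  have e0 : (rpowH hA.1 ((s + t) / 2) * Z * rpowH hB.1 ((s + t) / 2))ᴴ *
      (rpowH hA.1 ((s + t) / 2) * Z * rpowH hB.1 ((s + t) / 2)) =
      rpowH hB.1 ((s + t) / 2) *
        (Zᴴ * (rpowH hA.1 ((s + t) / 2) * (rpowH hA.1 ((s + t) / 2) *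
          (Z * rpowH hB.1 ((s + t) / 2))))) := by
    rw [hMt]
    simp only [mul_assoc]
  have e2 : (Zᴴ * (rpowH hA.1 ((s + t) / 2) * (rpowH hA.1 ((s + t) / 2) *
        (Z * rpowH hB.1 ((s + t) / 2))))) * rpowH hB.1 ((s + t) / 2) =
      (Zᴴ * rpowH hA.1 t) * (rpowH hA.1 s * (Z * (rpowH hB.1 s * rpowH hB.1 t))) := by
    simp only [mul_assoc]
    rw [haa, ← hbb']
  have e4 : (rpowH hA.1 s * (Z * (rpowH hB.1 s * rpowH hB.1 t))) * (Zᴴ * rpowH hA.1 t) =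
      (rpowH hA.1 s * Z * rpowH hB.1 s) * (rpowH hB.1 t * (Zᴴ * rpowH hA.1 t)) := by
    simp only [mul_assoc]
  have hconj : ‖rpowH hB.1 t * (Zᴴ * rpowH hA.1 t)‖₊ = ‖rpowH hA.1 t * Z * rpowH hB.1 t‖₊ := by
    have : rpowH hB.1 t * (Zᴴ * rpowH hA.1 t) =
        (rpowH hA.1 t * Z * rpowH hB.1 t)ᴴ := by
      rw [conjTranspose_mul, conjTranspose_mul,
        (rpowH_isHermitian hA.1 t), (rpowH_isHermitian hB.1 t)]
    rw [this, Matrix.l2_opNNNorm_conjTranspose]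
  have hsa : IsSelfAdjoint ((rpowH hA.1 ((s + t) / 2) * Z * rpowH hB.1 ((s + t) / 2))ᴴ *
      (rpowH hA.1 ((s + t) / 2) * Z * rpowH hB.1 ((s + t) / 2))) :=
    Matrix.isHermitian_conjTranspose_mul_self _
  have key : ((‖rpowH hA.1 ((s + t) / 2) * Z * rpowH hB.1 ((s + t) / 2)‖₊ ^ 2 : ℝ≥0) : ℝ≥0∞) ≤
      ((‖rpowH hA.1 t * Z * rpowH hB.1 t‖₊ * ‖rpowH hA.1 s * Z * rpowH hB.1 s‖₊ : ℝ≥0) : ℝ≥0∞) := by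
    calc ((‖rpowH hA.1 ((s + t) / 2) * Z * rpowH hB.1 ((s + t) / 2)‖₊ ^ 2 : ℝ≥0) : ℝ≥0∞)
        = (‖(rpowH hA.1 ((s + t) / 2) * Z * rpowH hB.1 ((s + t) / 2))ᴴ *
            (rpowH hA.1 ((s + t) / 2) * Z * rpowH hB.1 ((s + t) / 2))‖₊ : ℝ≥0∞) := by
          rw [Matrix.l2_opNNNorm_conjTranspose_mul_self, sq]
      _ = spectralRadius ℂ ((rpowH hA.1 ((s + t) / 2) * Z * rpowH hB.1 ((s + t) / 2))ᴴ *
            (rpowH hA.1 ((s + t) / 2) * Z * rpowH hB.1 ((s + t) / 2))) :=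
          (hsa.spectralRadius_eq_nnnorm).symm
      _ = spectralRadius ℂ ((Zᴴ * (rpowH hA.1 ((s + t) / 2) * (rpowH hA.1 ((s + t) / 2) *
            (Z * rpowH hB.1 ((s + t) / 2))))) * rpowH hB.1 ((s + t) / 2)) := by
          rw [e0, aux_specRad_comm]
      _ = spectralRadius ℂ ((rpowH hA.1 s * Z * rpowH hB.1 s) *
            (rpowH hB.1 t * (Zᴴ * rpowH hA.1 t))) := by
          rw [e2, aux_specRad_comm, e4]
      _ ≤ (‖(rpowH hA.1 s * Z * rpowH hB.1 s) * (rpowH hB.1 t * (Zᴴ * rpowH hA.1 t))‖₊ : ℝ≥0∞) :=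
          spectrum.spectralRadius_le_nnnorm _
      _ ≤ ((‖rpowH hA.1 s * Z * rpowH hB.1 s‖₊ * ‖rpowH hB.1 t * (Zᴴ * rpowH hA.1 t)‖₊ : ℝ≥0) : ℝ≥0∞) := by
          exact_mod_cast Matrix.l2_opNNNorm_mul _ _
      _ = ((‖rpowH hA.1 t * Z * rpowH hB.1 t‖₊ * ‖rpowH hA.1 s * Z * rpowH hB.1 s‖₊ : ℝ≥0) : ℝ≥0∞) := by
          rw [hconj, mul_comm]
  exact_mod_cast key

lemma aux_norm_matAbs {n : ℕ} (X : Matrix (Fin n) (Fin n) ℂ) : ‖matAbs X‖ = ‖X‖ := by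
  have h1 : matAbs X * matAbs X = Xᴴ * X := by
    have hm : matAbs X = cfc Real.sqrt (Xᴴ * X) := by
      rw [Matrix.IsHermitian.cfc_eq (A := Xᴴ * X) (posSemidef_conjTranspose_mul_self X).1]; rfl
    rw [hm, ← cfc_mul _ _ (Xᴴ * X) (aux_contOn _ _) (aux_contOn _ _)]
    conv_rhs => rw [← cfc_id ℝ (Xᴴ * X) (posSemidef_conjTranspose_mul_self X).1]
    exact cfc_congr fun x hx =>
      Real.mul_self_sqrt (aux_spectrum_nonneg (posSemidef_conjTranspose_mul_self X) hx)
  have h2 : (matAbs X)ᴴ = matAbs X := (matAbs_posSemidef X).1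
  have h3 : ‖(matAbs X)ᴴ * matAbs X‖ = ‖matAbs X‖ * ‖matAbs X‖ :=
    Matrix.l2_opNorm_conjTranspose_mul_self _
  rw [h2, h1, Matrix.l2_opNorm_conjTranspose_mul_self] at h3
  nlinarith [norm_nonneg X, norm_nonneg (matAbs X)]

lemma aux_val_eq {n : ℕ} (X : Matrix (Fin n) (Fin n) ℂ) {α : ℝ} (hα : 0 < α) :
    opN (rpowH (matAbs_posSemidef X).1 α) = (opN X) ^ α := by
  rw [aux_opN_eq, aux_opN_eq, aux_rpowH_eq_cfc,
    aux_norm_cfc_rpow (matAbs_posSemidef X) hα, aux_norm_matAbs]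

/-! ### Continuity -/

noncomputable def auxToECLM {n : ℕ} :
    Matrix (Fin n) (Fin n) ℂ →ₗ[ℂ] (EuclideanSpace ℂ (Fin n) →L[ℂ] EuclideanSpace ℂ (Fin n)) where
  toFun := fun M => Matrix.toEuclideanCLM (𝕜 := ℂ) M
  map_add' := fun x y => map_add _ x y
  map_smul' := fun c x => map_smul (Matrix.toEuclideanCLM (𝕜 := ℂ)) c x

lemma aux_continuous_opN {n : ℕ} : Continuous fun M : Matrix (Fin n) (Fin n) ℂ => opN M :=
  continuous_norm.comp (auxToECLM (n := n)).continuous_of_finiteDimensional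

lemma aux_continuous_rpowH {n : ℕ} {A : Matrix (Fin n) (Fin n) ℂ} (hA : A.PosDef) :
    Continuous fun u : ℝ => rpowH hA.1 u := by
  unfold rpowH
  refine Continuous.matrix_mul (Continuous.matrix_mul continuous_const ?_) continuous_const
  apply Continuous.matrix_diagonal
  apply continuous_pi
  intro i
  have h : (fun u : ℝ => ((hA.1.eigenvalues i ^ u : ℝ) : ℂ)) =
      fun u : ℝ => ((Real.exp (Real.log (hA.1.eigenvalues i) * u) : ℝ) : ℂ) := by
    funext u
    rw [Real.rpow_def_of_pos (hA.eigenvalues_pos i)]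
  rw [h]
  fun_prop

lemma aux_continuous_g {n : ℕ} {A B : Matrix (Fin n) (Fin n) ℂ} (Z : Matrix (Fin n) (Fin n) ℂ)
    (hA : A.PosDef) (hB : B.PosDef) :
    Continuous fun u : ℝ => opN (rpowH hA.1 u * Z * rpowH hB.1 u) := by
  apply aux_continuous_opN.comp
  exact ((aux_continuous_rpowH hA).matrix_mul continuous_const).matrix_mul
    (aux_continuous_rpowH hB)

/-! ### Midpoint convexity plus continuity implies convexity -/

lemma aux_phi_mid (f : ℝ → ℝ) (x y : ℝ) (hm : ∀ u v : ℝ, f ((u + v) / 2) ≤ (f u + f v) / 2)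
    (φ : ℝ → ℝ) (hφ : φ = fun c => f (c * x + (1 - c) * y) - (c * f x + (1 - c) * f y))
    (u v : ℝ) : φ ((u + v) / 2) ≤ (φ u + φ v) / 2 := by
  subst hφ
  simp only
  have h1 : ((u + v) / 2) * x + (1 - (u + v) / 2) * y
      = ((u * x + (1 - u) * y) + (v * x + (1 - v) * y)) / 2 := by ring
  have h2 := hm (u * x + (1 - u) * y) (v * x + (1 - v) * y)
  rw [h1]
  linarith

lemma aux_midpointConvex_of_continuous (f : ℝ → ℝ) (hc : Continuous f)
    (hm : ∀ u v : ℝ, f ((u + v) / 2) ≤ (f u + f v) / 2) : ConvexOn ℝ Set.univ f := by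
  refine ⟨convex_univ, ?_⟩
  intro x _ y _ a b ha hb hab
  suffices H : ∀ c : ℝ, 0 ≤ c → c ≤ 1 → f (c * x + (1 - c) * y) ≤ c * f x + (1 - c) * f y by
    have := H a ha (by linarith)
    rw [show (1 : ℝ) - a = b by linarith] at this
    simpa [smul_eq_mul] using this
  intro c hc0 hc1
  set φ : ℝ → ℝ := fun c => f (c * x + (1 - c) * y) - (c * f x + (1 - c) * f y) with hφ
  have hφc : Continuous φ := by
    apply Continuous.sub
    · exact hc.comp (by continuity)
    · continuity
  have hmidφ : ∀ u v : ℝ, φ ((u + v) / 2) ≤ (φ u + φ v) / 2 := aux_phi_mid f x y hm φ hφ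
  suffices hψ : φ c ≤ 0 by
    have : f (c * x + (1 - c) * y) - (c * f x + (1 - c) * f y) ≤ 0 := hψ
    linarith
  have key : ∀ k : ℕ, ∀ m : ℕ, m ≤ 2 ^ k → φ ((m : ℝ) / 2 ^ k) ≤ 0 := by
    intro k
    induction k with
    | zero =>
      intro m hm1
      interval_cases m
      · simp [φ]
      · simp [φ]
    | succ k ih =>
      intro m hmle
      have h2pow : (2 : ℕ) ^ (k + 1) = 2 * 2 ^ k := by ring
      set p := (m + 1) / 2 with hp
      set q := m / 2 with hq
      have hpq : p + q = m := by omega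
      have hple : p ≤ 2 ^ k := by omega
      have hqle : q ≤ 2 ^ k := by omega
      have harith : (m : ℝ) / 2 ^ (k + 1) = ((p : ℝ) / 2 ^ k + (q : ℝ) / 2 ^ k) / 2 := by
        have : ((p : ℝ) + q) = m := by exact_mod_cast congrArg Nat.cast hpq
        field_simp
        rw [pow_succ]
        push_cast [← this]
        ring
      rw [harith]
      have := hmidφ ((p : ℝ) / 2 ^ k) ((q : ℝ) / 2 ^ k)
      have h1 := ih p hple
      have h2 := ih q hqle
      linarith
  have hseq : Filter.Tendsto (fun k : ℕ => ((⌊c * 2 ^ k⌋₊ : ℝ) / 2 ^ k)) Filter.atTop (nhds c) := by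
    have hlow : ∀ k : ℕ, c - (2 ^ k)⁻¹ ≤ (⌊c * 2 ^ k⌋₊ : ℝ) / 2 ^ k := by
      intro k
      have h1 : c * 2 ^ k < ⌊c * 2 ^ k⌋₊ + 1 := Nat.lt_floor_add_one _
      have h2 : (0 : ℝ) < 2 ^ k := by positivity
      rw [div_eq_mul_inv, sub_le_iff_le_add]
      have h3 : c * 2 ^ k ≤ ⌊c * 2 ^ k⌋₊ + 1 := h1.le
      calc c = c * 2 ^ k * (2 ^ k)⁻¹ := by field_simp
        _ ≤ (⌊c * 2 ^ k⌋₊ + 1) * (2 ^ k)⁻¹ := by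
            apply mul_le_mul_of_nonneg_right h3 (by positivity)
        _ = ⌊c * 2 ^ k⌋₊ * (2 ^ k)⁻¹ + (2 ^ k)⁻¹ := by ring
    have hhigh : ∀ k : ℕ, (⌊c * 2 ^ k⌋₊ : ℝ) / 2 ^ k ≤ c := by
      intro k
      have h2 : (0 : ℝ) < 2 ^ k := by positivity
      rw [div_le_iff₀ h2]
      exact Nat.floor_le (by positivity)
    have hlim : Filter.Tendsto (fun k : ℕ => c - ((2 : ℝ) ^ k)⁻¹) Filter.atTop (nhds c) := by
      have : Filter.Tendsto (fun k : ℕ => ((2 : ℝ) ^ k)⁻¹) Filter.atTop (nhds 0) := by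
        simp only [← inv_pow]
        exact tendsto_pow_atTop_nhds_zero_of_lt_one (by norm_num) (by norm_num)
      simpa using tendsto_const_nhds.sub this
    exact tendsto_of_tendsto_of_tendsto_of_le_of_le hlim tendsto_const_nhds hlow hhigh
  have hφle : ∀ k : ℕ, φ ((⌊c * 2 ^ k⌋₊ : ℝ) / 2 ^ k) ≤ 0 := by
    intro k
    apply key k
    calc ⌊c * 2 ^ k⌋₊ ≤ ⌊(2 : ℝ) ^ k⌋₊ :=
          Nat.floor_le_floor (by nlinarith [pow_pos (show (0:ℝ) < 2 by norm_num) k])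
      _ = 2 ^ k := by
          rw [show ((2 : ℝ) ^ k) = ((2 ^ k : ℕ) : ℝ) by push_cast; ring, Nat.floor_natCast]
  have : Filter.Tendsto (fun k : ℕ => φ ((⌊c * 2 ^ k⌋₊ : ℝ) / 2 ^ k)) Filter.atTop (nhds (φ c)) :=
    (hφc.continuousAt).tendsto.comp hseq
  exact le_of_tendsto this (Filter.Eventually.of_forall hφle)

/-! ### Main theorem -/

theorem stmt_15 {n : ℕ} (A B Z : Matrix (Fin n) (Fin n) ℂ)
    (hA : A.PosDef) (hB : B.PosDef) (α : ℝ) (hα : 0 < α) :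
    ConvexOn ℝ Set.univ
      (fun t : ℝ => Real.log
        (opN (rpowH (matAbs_posSemidef (rpowH hA.1 t * Z * rpowH hB.1 t)).1 α))) ∧
    ∀ s t : ℝ,
      opN (rpowH (matAbs_posSemidef
          (rpowH hA.1 ((s + t) / 2) * Z * rpowH hB.1 ((s + t) / 2))).1 α) ≤
        opN (rpowH (matAbs_posSemidef (rpowH hA.1 t * Z * rpowH hB.1 t)).1 α) ^ (1 / 2 : ℝ) *
          opN (rpowH (matAbs_posSemidef (rpowH hA.1 s * Z * rpowH hB.1 s)).1 α) ^ (1 / 2 : ℝ) := by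
  have hval : ∀ u : ℝ,
      opN (rpowH (matAbs_posSemidef (rpowH hA.1 u * Z * rpowH hB.1 u)).1 α)
        = (opN (rpowH hA.1 u * Z * rpowH hB.1 u)) ^ α :=
    fun u => aux_val_eq _ hα
  have hgnn : ∀ u : ℝ, 0 ≤ opN (rpowH hA.1 u * Z * rpowH hB.1 u) := by
    intro u
    rw [aux_opN_eq]
    exact norm_nonneg _
  -- real midpoint inequality for g
  have hmid : ∀ u v : ℝ,
      opN (rpowH hA.1 ((u + v) / 2) * Z * rpowH hB.1 ((u + v) / 2)) ^ 2 ≤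
        opN (rpowH hA.1 v * Z * rpowH hB.1 v) * opN (rpowH hA.1 u * Z * rpowH hB.1 u) := by
    intro u v
    have h := aux_core_ineq A B Z hA hB u v
    have hcast : ∀ X : Matrix (Fin n) (Fin n) ℂ, opN X = ((‖X‖₊ : ℝ≥0) : ℝ) := by
      intro X
      rw [aux_opN_eq, coe_nnnorm]
    rw [hcast, hcast, hcast]
    exact_mod_cast h
  constructor
  · -- convexity
    by_cases hZ : Z = 0
    · subst hZ
      have hzero : ∀ u : ℝ, (fun t : ℝ => Real.log
          (opN (rpowH (matAbs_posSemidef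
            (rpowH hA.1 t * 0 * rpowH hB.1 t)).1 α))) u = 0 := by
        intro u
        simp only [hval u]
        rw [mul_zero, zero_mul, aux_opN_eq, norm_zero, Real.zero_rpow hα.ne', Real.log_zero]
      have : (fun t : ℝ => Real.log
          (opN (rpowH (matAbs_posSemidef (rpowH hA.1 t * 0 * rpowH hB.1 t)).1 α)))
          = fun _ : ℝ => (0 : ℝ) := funext hzero
      rw [this]
      exact convexOn_const 0 convex_univ
    · have hgpos : ∀ u : ℝ, 0 < opN (rpowH hA.1 u * Z * rpowH hB.1 u) := by
        intro u
        rw [aux_opN_eq]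
        exact norm_pos_iff.mpr (aux_sandwich_ne_zero hA hB hZ u)
      have hfun : (fun t : ℝ => Real.log
          (opN (rpowH (matAbs_posSemidef (rpowH hA.1 t * Z * rpowH hB.1 t)).1 α)))
          = fun t : ℝ => α * Real.log (opN (rpowH hA.1 t * Z * rpowH hB.1 t)) := by
        funext u
        rw [hval u, Real.log_rpow (hgpos u)]
      rw [hfun]
      apply aux_midpointConvex_of_continuous
      · exact continuous_const.mul ((aux_continuous_g Z hA hB).log
          (fun u => (hgpos u).ne'))
      · intro u v
        have h2 : Real.log (opN (rpowH hA.1 ((u + v) / 2) * Z * rpowH hB.1 ((u + v) / 2)) ^ 2)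
            ≤ Real.log (opN (rpowH hA.1 v * Z * rpowH hB.1 v) *
                opN (rpowH hA.1 u * Z * rpowH hB.1 u)) :=
          Real.log_le_log (pow_pos (hgpos _) 2) (hmid u v)
        rw [Real.log_pow, Real.log_mul (hgpos v).ne' (hgpos u).ne'] at h2
        push_cast at h2
        have := mul_le_mul_of_nonneg_left
          (show Real.log (opN (rpowH hA.1 ((u + v) / 2) * Z * rpowH hB.1 ((u + v) / 2)))
              ≤ (Real.log (opN (rpowH hA.1 u * Z * rpowH hB.1 u)) +
                 Real.log (opN (rpowH hA.1 v * Z * rpowH hB.1 v))) / 2 from by linarith)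
          hα.le
        linarith [this]
  · -- the explicit inequality
    intro s t
    simp only [hval]
    have hmid' := hmid s t
    have e1 : (opN (rpowH hA.1 t * Z * rpowH hB.1 t) ^ α) ^ (1 / 2 : ℝ) *
        (opN (rpowH hA.1 s * Z * rpowH hB.1 s) ^ α) ^ (1 / 2 : ℝ)
        = (opN (rpowH hA.1 t * Z * rpowH hB.1 t) *
            opN (rpowH hA.1 s * Z * rpowH hB.1 s)) ^ (α / 2) := by
      rw [← Real.rpow_mul (hgnn t), ← Real.rpow_mul (hgnn s),
        Real.mul_rpow (hgnn t) (hgnn s), show α * (1 / 2 : ℝ) = α / 2 from by ring]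
    have e2 : opN (rpowH hA.1 ((s + t) / 2) * Z * rpowH hB.1 ((s + t) / 2)) ^ α
        = (opN (rpowH hA.1 ((s + t) / 2) * Z * rpowH hB.1 ((s + t) / 2)) ^ 2) ^ (α / 2) := by
      rw [← Real.rpow_natCast (opN (rpowH hA.1 ((s + t) / 2) * Z * rpowH hB.1 ((s + t) / 2))) 2,
        ← Real.rpow_mul (hgnn ((s + t) / 2))]
      rw [show ((2 : ℕ) : ℝ) * (α / 2) = α from by push_cast; ring]
    rw [e1, e2]
    exact Real.rpow_le_rpow (by positivity) hmid' (by linarith)
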